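/- Let (T₁,...,T₇) and (T'₁,...,T'₇) be 7-tuples of bounded operators on Hilbert spaces H and H' with T₇, T'₇ contractions, and suppose there is a unitary U : H → H' with U T_i = T'_i U for all 1 ≤ i ≤ 7. If F_i on (the closure of Ran D_{T₇}) and F'_i on (the closure of Ran D_{T'₇}) satisfy T_i - T_{7-i}* T₇ = D_{T₇} F_i D_{T₇} and T'_i - T'_{7-i}* T'₇ = D_{T'₇} F'_i D_{T'₇} for 1 ≤ i ≤ 6, then D_{T'₇} U F_i U* D_{T'₇} = D_{T'₇} F'_i D_{T'₇}; in particular, if F_i, F'_i are supported on the respective defect spaces, F'_i = U F_i U* as operators on those spaces. -/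

import Mathlib

open ContinuousLinearMap
open scoped InnerProductSpace

set_option synthInstance.maxHeartbeats 1000000 in
set_option maxHeartbeats 1000000 in
private lemma pos_sq_inj {H' : Type*} [NormedAddCommGroup H'] [InnerProductSpace ℂ H']
    [CompleteSpace H'] {A B : H' →L[ℂ] H'} (hA : A.IsPositive) (hB : B.IsPositive)
    (h : A ∘L A = B ∘L B) : A = B := by
  have hA' : (0 : H' →L[ℂ] H') ≤ A := (nonneg_iff_isPositive A).mpr hA
  have hB' : (0 : H' →L[ℂ] H') ≤ B := (nonneg_iff_isPositive B).mpr hB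
  have h2 : A ^ 2 = B ^ 2 := by
    rw [pow_two, pow_two, ContinuousLinearMap.mul_def, ContinuousLinearMap.mul_def]; exact h
  calc A = CFC.sqrt (A ^ 2) := (CFC.sqrt_sq A hA').symm
    _ = CFC.sqrt (B ^ 2) := by rw [h2]
    _ = B := CFC.sqrt_sq B hB'

/-- If two 7-tuples of operators are intertwined by a unitary `U`, then their fundamental
operators are conjugated by `U`: `D_{T'₇} U F_i U* D_{T'₇} = D_{T'₇} F'_i D_{T'₇}`; and if
`F_i, F'_i` are supported on the respective defect spaces, then `F'_i = U F_i U*`. -/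
theorem fundamental_operators_unitarily_equivalent
    {H H' : Type*} [NormedAddCommGroup H] [InnerProductSpace ℂ H] [CompleteSpace H]
    [NormedAddCommGroup H'] [InnerProductSpace ℂ H'] [CompleteSpace H']
    (T : ℕ → (H →L[ℂ] H)) (T' : ℕ → (H' →L[ℂ] H'))
    (hT7 : ‖T 7‖ ≤ 1) (hT'7 : ‖T' 7‖ ≤ 1)
    (U : H ≃ₗᵢ[ℂ] H')
    (hU : ∀ i, 1 ≤ i → i ≤ 7 → ∀ x : H, U (T i x) = T' i (U x))
    (D7 : H →L[ℂ] H) (D7' : H' →L[ℂ] H')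
    (hD7 : D7.IsPositive) (hD72 : D7 ∘L D7 = 1 - adjoint (T 7) ∘L T 7)
    (hD7' : D7'.IsPositive) (hD7'2 : D7' ∘L D7' = 1 - adjoint (T' 7) ∘L T' 7)
    (F : ℕ → (H →L[ℂ] H)) (F' : ℕ → (H' →L[ℂ] H'))
    (hF : ∀ i, 1 ≤ i → i ≤ 6 →
      T i - adjoint (T (7 - i)) ∘L T 7 = D7 ∘L F i ∘L D7)
    (hF' : ∀ i, 1 ≤ i → i ≤ 6 →
      T' i - adjoint (T' (7 - i)) ∘L T' 7 = D7' ∘L F' i ∘L D7') :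
    ∀ i, 1 ≤ i → i ≤ 6 →
      (∀ x : H', D7' (U (F i (U.symm (D7' x)))) = D7' (F' i (D7' x))) ∧
      ((∀ x : H, F i x ∈ closure (Set.range ⇑D7)) →
       (∀ x : H, (∀ y : H, ⟪D7 y, x⟫_ℂ = 0) → F i x = 0) →
       (∀ x : H', F' i x ∈ closure (Set.range ⇑D7')) →
       (∀ x : H', (∀ y : H', ⟪D7' y, x⟫_ℂ = 0) → F' i x = 0) →
       ∀ x : H', F' i x = U (F i (U.symm x))) := by
  classical
  -- the unitary as a continuous linear map and its inverse
  set V : H →L[ℂ] H' := U.toLinearIsometry.toContinuousLinearMap with hV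
  set W : H' →L[ℂ] H := U.symm.toLinearIsometry.toContinuousLinearMap with hW
  have hVx : ∀ x : H, V x = U x := fun _ => rfl
  have hWx : ∀ x : H', W x = U.symm x := fun _ => rfl
  have hWV : W ∘L V = 1 := by ext x; simp [hVx, hWx]
  have hVW : V ∘L W = 1 := by ext x; simp [hVx, hWx]
  -- adjoint of V is W
  have hadjV : adjoint V = W := by
    symm
    rw [eq_adjoint_iff]
    intro x y
    calc ⟪W x, y⟫_ℂ = ⟪U (U.symm x), U y⟫_ℂ := by rw [U.inner_map_map]; rfl
      _ = ⟪x, V y⟫_ℂ := by rw [U.apply_symm_apply]; rfl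
  -- pointwise intertwining, conjugated form
  have hTx : ∀ i, 1 ≤ i → i ≤ 7 → ∀ z : H', T i (U.symm z) = U.symm (T' i z) := by
    intro i h1 h2 z
    have := hU i h1 h2 (U.symm z)
    rw [U.apply_symm_apply] at this
    rw [← this, U.symm_apply_apply]
  have hTax : ∀ i, 1 ≤ i → i ≤ 7 → ∀ z : H', U (adjoint (T i) (U.symm z)) = adjoint (T' i) z := by
    intro i h1 h2
    have hop : V ∘L T i = T' i ∘L V := by ext x; exact hU i h1 h2 x
    have := congrArg adjoint hop
    rw [adjoint_comp, adjoint_comp, hadjV] at this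
    intro z
    have hz := congrFun (congrArg (fun (A : H' →L[ℂ] H) => (A : H' → H)) this) z
    simp only [coe_comp', Function.comp_apply] at hz
    -- hz : adjoint (T i) (W z) = W (adjoint (T' i) z)
    rw [hWx] at hz
    rw [hz, hWx, U.apply_symm_apply]
  -- pointwise square of D7 and D7'
  have hD72x : ∀ z : H, D7 (D7 z) = z - adjoint (T 7) (T 7 z) := by
    intro z
    have := congrFun (congrArg (fun (A : H →L[ℂ] H) => (A : H → H)) hD72) z
    simpa using this
  have hD7'2x : ∀ z : H', D7' (D7' z) = z - adjoint (T' 7) (T' 7 z) := by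
    intro z
    have := congrFun (congrArg (fun (A : H' →L[ℂ] H') => (A : H' → H')) hD7'2) z
    simpa using this
  -- the conjugated defect operator equals D7'
  have hE : V ∘L D7 ∘L W = D7' := by
    apply pos_sq_inj
    · have := hD7.conj_adjoint V
      rwa [hadjV] at this
    · exact hD7'
    · ext x
      simp only [coe_comp', Function.comp_apply, hVx, hWx, U.symm_apply_apply]
      calc U (D7 (D7 (U.symm x)))
          = U (U.symm x - adjoint (T 7) (T 7 (U.symm x))) := by rw [hD72x]
        _ = x - U (adjoint (T 7) (T 7 (U.symm x))) := by rw [map_sub, U.apply_symm_apply]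
        _ = x - U (adjoint (T 7) (U.symm (T' 7 x))) := by
            rw [hTx 7 (by norm_num) le_rfl]
        _ = x - adjoint (T' 7) (T' 7 x) := by rw [hTax 7 (by norm_num) le_rfl]
        _ = D7' (D7' x) := (hD7'2x x).symm
  -- D7' conjugates to D7 through U
  have hUD : ∀ y : H, U (D7 y) = D7' (U y) := by
    intro y
    have := congrFun (congrArg (fun (A : H' →L[ℂ] H') => (A : H' → H')) hE) (U y)
    simp only [coe_comp', Function.comp_apply, hVx, hWx, U.symm_apply_apply] at this
    exact this
  have hUD' : ∀ z : H', U.symm (D7' z) = D7 (U.symm z) := by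
    intro z
    have := hUD (U.symm z)
    rw [U.apply_symm_apply] at this
    rw [← this, U.symm_apply_apply]
  -- pointwise fundamental equations
  intro i hi1 hi6
  have hFx : ∀ z : H, D7 (F i (D7 z)) = T i z - adjoint (T (7 - i)) (T 7 z) := by
    intro z
    have := congrFun (congrArg (fun (A : H →L[ℂ] H) => (A : H → H)) (hF i hi1 hi6)) z
    simpa using this.symm
  have hF'x : ∀ z : H', D7' (F' i (D7' z)) = T' i z - adjoint (T' (7 - i)) (T' 7 z) := by
    intro z
    have := congrFun (congrArg (fun (A : H' →L[ℂ] H') => (A : H' → H')) (hF' i hi1 hi6)) z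
    simpa using this.symm
  have part1 : ∀ x : H', D7' (U (F i (U.symm (D7' x)))) = D7' (F' i (D7' x)) := by
    intro x
    calc D7' (U (F i (U.symm (D7' x))))
        = U (D7 (F i (D7 (U.symm x)))) := by rw [← hUD, hUD']
      _ = U (T i (U.symm x) - adjoint (T (7 - i)) (T 7 (U.symm x))) := by rw [hFx]
      _ = U (T i (U.symm x)) - U (adjoint (T (7 - i)) (T 7 (U.symm x))) := map_sub _ _ _
      _ = T' i x - adjoint (T' (7 - i)) (T' 7 x) := by
          rw [hU i hi1 (by omega) (U.symm x), U.apply_symm_apply,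
            hTx 7 (by norm_num) le_rfl, hTax (7 - i) (by omega) (by omega)]
      _ = D7' (F' i (D7' x)) := (hF'x x).symm
  refine ⟨part1, ?_⟩
  intro hFr hFs hF'r hF's x
  -- G := F' i - conjugated F i, vanishes on closure of range D7'
  set g : H' → H' := fun v => F' i v - U (F i (U.symm v)) with hg
  have hgcont : Continuous g := by
    apply Continuous.sub (F' i).continuous
    exact U.continuous.comp ((F i).continuous.comp U.symm.continuous)
  -- g vanishes on the orthogonal complement of range D7'
  have hgperp : ∀ v : H', (∀ y : H', ⟪D7' y, v⟫_ℂ = 0) → g v = 0 := by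
    intro v hv
    have h1 : F' i v = 0 := hF's v hv
    have h2 : F i (U.symm v) = 0 := by
      apply hFs
      intro y
      calc ⟪D7 y, U.symm v⟫_ℂ = ⟪U (D7 y), U (U.symm v)⟫_ℂ := (U.inner_map_map _ _).symm
        _ = ⟪D7' (U y), v⟫_ℂ := by rw [hUD, U.apply_symm_apply]
        _ = 0 := hv (U y)
    simp [hg, h1, h2]
  -- g maps into closure of range D7'
  -- the closure of the range of D7' as a submodule
  set S : Submodule ℂ H' := (LinearMap.range (D7' : H' →ₗ[ℂ] H')).topologicalClosure with hS
  have hScoe : (S : Set H') = closure (Set.range ⇑D7') := by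
    rw [hS, Submodule.topologicalClosure_coe, LinearMap.coe_range]
    rfl
  have hSrange : ∀ y : H', D7' y ∈ S :=
    fun y => Submodule.le_topologicalClosure _ (LinearMap.mem_range_self _ y)
  -- U maps closure of range D7 into closure of range D7'
  have hUcl : ∀ w : H, w ∈ closure (Set.range ⇑D7) → U w ∈ closure (Set.range ⇑D7') := by
    intro w hw
    have h1 : U w ∈ closure (⇑U '' Set.range ⇑D7) :=
      image_closure_subset_closure_image U.continuous ⟨w, hw, rfl⟩
    refine closure_mono ?_ h1
    rintro _ ⟨_, ⟨y, rfl⟩, rfl⟩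
    exact ⟨U y, (hUD y).symm⟩
  -- g maps into S
  have hgrange : ∀ v : H', g v ∈ S := by
    intro v
    apply Submodule.sub_mem
    · rw [← SetLike.mem_coe, hScoe]; exact hF'r v
    · rw [← SetLike.mem_coe, hScoe]; exact hUcl _ (hFr (U.symm v))
  -- D7' kills g on S
  have hD7g : ∀ v : H', v ∈ S → D7' (g v) = 0 := by
    intro v hv
    have hclosed : IsClosed {v : H' | D7' (g v) = 0} :=
      isClosed_eq (D7'.continuous.comp hgcont) continuous_const
    have hsub : (S : Set H') ⊆ {v : H' | D7' (g v) = 0} := by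
      rw [hScoe]
      apply hclosed.closure_subset_iff.mpr
      rintro _ ⟨y, rfl⟩
      simp only [Set.mem_setOf_eq, hg, map_sub]
      rw [sub_eq_zero]
      exact (part1 y).symm
    exact hsub hv
  -- hence g vanishes on S
  have hgS : ∀ v : H', v ∈ S → g v = 0 := by
    intro v hv
    have hmem : g v ∈ S := hgrange v
    have hperp : g v ∈ Sᗮ := by
      intro u hu
      have hclosed : IsClosed {u : H' | ⟪u, g v⟫_ℂ = 0} :=
        isClosed_eq (continuous_id.inner continuous_const) continuous_const
      have hsub : (S : Set H') ⊆ {u : H' | ⟪u, g v⟫_ℂ = 0} := by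
        rw [hScoe]
        apply hclosed.closure_subset_iff.mpr
        rintro _ ⟨y, rfl⟩
        simp only [Set.mem_setOf_eq]
        have hsa : adjoint D7' = D7' := hD7'.isSelfAdjoint
        calc ⟪D7' y, g v⟫_ℂ = ⟪adjoint D7' y, g v⟫_ℂ := by rw [hsa]
          _ = ⟪y, D7' (g v)⟫_ℂ := adjoint_inner_left _ _ _
          _ = 0 := by rw [hD7g v hv, inner_zero_right]
      exact hsub hu
    have := (Submodule.orthogonal_disjoint S).le_bot ⟨hmem, hperp⟩
    simpa using this
  -- orthogonal decomposition of x
  have hSclosed : IsClosed (S : Set H') := Submodule.isClosed_topologicalClosure _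
  haveI : CompleteSpace S := hSclosed.completeSpace_coe
  set p : H' := (S.orthogonalProjectionOnto x : H') with hp
  have hqperp : x - p ∈ Sᗮ := Submodule.sub_starProjection_mem_orthogonal (K := S) x
  have hgq : g (x - p) = 0 := by
    apply hgperp
    intro y
    exact (Submodule.mem_orthogonal _ _).mp hqperp _ (hSrange y)
  have hgp : g p = 0 := hgS p (S.orthogonalProjectionOnto x).2
  have hgx : g x = 0 := by
    have hdec : g x = g p + g (x - p) := by
      simp only [hg, map_sub, U.symm.map_sub, (F i).map_sub, U.map_sub]
      abel
    rw [hdec, hgp, hgq, add_zero]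
  have := sub_eq_zero.mp hgx
  exact this
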